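/- Under Notation (*): if (J(H)^s : m) = p is a prime with y ∉ p, then (J(H̃)^s : m) = p, where H̃ is the induced subhypergraph of H on X. -/

import Mathlib

open MvPolynomial

noncomputable section

/-- A finite simple hypergraph on a vertex set `V`: edges are nonempty subsets of `V`
forming an antichain (a clutter). -/
structure Hypergraph' (σ : Type*) where
  V : Finset σ
  E : Finset (Finset σ)
  edge_sub : ∀ e ∈ E, e ⊆ V
  edge_nonempty : ∀ e ∈ E, e.Nonempty
  simple : ∀ e ∈ E, ∀ f ∈ E, e ⊆ f → e = f

/-- The prime ideal generated by the variables indexed by `e`. -/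
def primeOf {σ : Type*} (K : Type*) [Field K] (e : Finset σ) : Ideal (MvPolynomial σ K) :=
  Ideal.span ((fun i => (X i : MvPolynomial σ K)) '' e)

/-- The cover ideal of a set of edges: the intersection of the edge primes. -/
def coverIdeal {σ : Type*} (K : Type*) [Field K] (E : Finset (Finset σ)) :
    Ideal (MvPolynomial σ K) :=
  ⨅ e ∈ E, primeOf K e

/-- The squarefree monomial supported on `T`. -/
def xU {σ : Type*} (K : Type*) [Field K] (T : Finset σ) : MvPolynomial σ K :=
  ∏ i ∈ T, X i
/-- `T` is a vertex cover of the edge set `E`. -/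
def IsCover {σ : Type*} (E : Finset (Finset σ)) (T : Finset σ) : Prop :=
  ∀ e ∈ E, ∃ v ∈ e, v ∈ T

/-- `T` is a minimal vertex cover of the edge set `E`. -/
def IsMinimalCover {σ : Type*} (E : Finset (Finset σ)) (T : Finset σ) : Prop :=
  IsCover E T ∧ ∀ T' ⊂ T, ¬ IsCover E T'

/-- `m` is a minimal monomial generator of the monomial ideal `I`: it lies in `I`, and
every divisor of `m` lying in `I` is associated to `m`. -/
def IsMinMonGen {σ K : Type*} [Field K] (I : Ideal (MvPolynomial σ K))
    (m : MvPolynomial σ K) : Prop :=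
  m ∈ I ∧ ∀ d : MvPolynomial σ K, d ∣ m → d ∈ I → Associated d m

/-- `(V', E')` is a shadow of the hypergraph `H`. -/
def IsShadow {σ : Type*} [DecidableEq σ] (H : Hypergraph' σ) (V' : Finset σ) (E' : Finset (Finset σ)) : Prop :=
  V' ⊆ H.V ∧ (∀ e ∈ E', e ⊆ V') ∧ (∀ e ∈ E', e.Nonempty) ∧
    (∀ e ∈ E', ∀ f ∈ E', e ⊆ f → e = f) ∧
    E'.card = H.E.card ∧ ∀ e ∈ H.E, e ∩ V' ∈ E'

/-- The cover ideal of a hypergraph on vertex set `V'` (edges `E'`, subsets of `V'`),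
as an ideal of the small polynomial ring `K[V']`. -/
def smallCover {σ : Type*} [DecidableEq σ] (K : Type*) [Field K] (V' : Finset σ)
    (E' : Finset (Finset σ)) : Ideal (MvPolynomial {x : σ // x ∈ V'} K) :=
  ⨅ e ∈ E', primeOf K (e.subtype (· ∈ V'))

/-- `(V', E')` is an odd cycle graph `C_{2n+1}` for some positive `n`. -/
def IsOddCycle {σ : Type*} [DecidableEq σ] (V' : Finset σ) (E' : Finset (Finset σ)) : Prop :=
  ∃ n : ℕ, 0 < n ∧ ∃ f : Fin (2 * n + 1) → σ, Function.Injective f ∧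
    V' = Finset.univ.image f ∧ E' = Finset.univ.image (fun i => ({f i, f (i + 1)} : Finset σ))

/- Notation (*): `H = (V, E)` is a hypergraph with `V = X ∪ {y}` where `X = V \ {y}`;
`y` belongs to exactly one edge `e_y ∈ E`; `e := e_y \ {y}`;
`H' = (X, (E \ {e_y}) ∪ {e})` is the shadow of `H` on `X`, with edge set
`insert (ey.erase y) (H.E.erase ey)`; `H̃ = H_X` is the induced subhypergraph on `X`,
with edge set `H.E.filter (· ⊆ H.V.erase y)`.  Cover ideals of `H'` and `H̃` are taken as
(cone) ideals of the ambient ring `K[V] = MvPolynomial σ K`, generated by the same monomials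
as the corresponding ideals of `K[X]`. -/

/-- Under Notation (*): if `(J(H)^s : m) = p` is prime with `y ∉ p`, then
`(J(H̃)^s : m) = p`, where `H̃ = H_X` is the induced subhypergraph on `X`. -/
theorem colon_induced_of_colon_prime_not_mem_y {σ K : Type*} [DecidableEq σ] [Field K]
    (H : Hypergraph' σ) (y : σ) (ey : Finset σ)
    (hyV : y ∈ H.V) (heyE : ey ∈ H.E) (hyey : y ∈ ey)
    (huniq : ∀ f ∈ H.E, y ∈ f → f = ey)
    (s : ℕ) (d : σ →₀ ℕ)
    (p : Ideal (MvPolynomial σ K)) (hp : p.IsPrime)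
    (hyp : (X y : MvPolynomial σ K) ∉ p)
    (hcolon : ((coverIdeal K H.E) ^ s).colon
        (Ideal.span {(monomial d (1 : K) : MvPolynomial σ K)}) = p) :
    ((coverIdeal K (H.E.filter (fun f => f ⊆ H.V.erase y))) ^ s).colon
        (Ideal.span {(monomial d (1 : K) : MvPolynomial σ K)}) = p := by
  set J := coverIdeal K H.E with hJ
  set Jt := coverIdeal K (H.E.filter (fun f => f ⊆ H.V.erase y)) with hJt
  set m : MvPolynomial σ K := monomial d (1 : K) with hm
  -- J ≤ Jt
  have hJle : J ≤ Jt := by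
    apply le_iInf₂
    intro f hf
    rw [Finset.mem_filter] at hf
    exact iInf₂_le f hf.1
  -- span {X y} * Jt ≤ J
  have hkey : Ideal.span {(X y : MvPolynomial σ K)} * Jt ≤ J := by
    rw [Ideal.mul_le]
    intro r hr z hz
    refine Submodule.mem_iInf _ |>.2 fun f => Submodule.mem_iInf _ |>.2 fun hf => ?_
    by_cases hyf : y ∈ f
    · have hfe : f = ey := huniq f hf hyf
      have hXy : (X y : MvPolynomial σ K) ∈ primeOf K f := by
        apply Ideal.subset_span
        exact ⟨y, hyf, rfl⟩
      have hr' : r ∈ primeOf K f := by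
        rw [Ideal.mem_span_singleton] at hr
        obtain ⟨c, rfl⟩ := hr
        exact Ideal.mul_mem_right _ _ hXy
      exact Ideal.mul_mem_right _ _ hr'
    · have hf' : f ∈ H.E.filter (fun f => f ⊆ H.V.erase y) := by
        rw [Finset.mem_filter]
        refine ⟨hf, fun v hv => Finset.mem_erase.2 ⟨?_, H.edge_sub f hf hv⟩⟩
        rintro rfl; exact hyf hv
      have hle : Jt ≤ primeOf K f := iInf₂_le f hf'
      exact Ideal.mul_mem_left _ _ (hle hz)
  -- pow version
  have hpow : ∀ w ∈ Jt ^ s, (X y : MvPolynomial σ K) ^ s * w ∈ J ^ s := by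
    intro w hw
    have h1 : (X y : MvPolynomial σ K) ^ s * w ∈
        Ideal.span {(X y : MvPolynomial σ K)} ^ s * Jt ^ s := by
      exact Ideal.mul_mem_mul (by
        rw [Ideal.span_singleton_pow]
        exact Ideal.mem_span_singleton_self _) hw
    have h2 : Ideal.span {(X y : MvPolynomial σ K)} ^ s * Jt ^ s ≤ J ^ s := by
      rw [← mul_pow]
      exact Ideal.pow_right_mono hkey s
    exact h2 h1
  apply le_antisymm
  · -- ⊆ : key direction
    intro g hg
    rw [Ideal.mem_colon_span_singleton] at hg
    have h1 : (X y : MvPolynomial σ K) ^ s * (g * m) ∈ J ^ s := by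
      simpa [smul_eq_mul] using hpow _ hg
    have h2 : ((X y : MvPolynomial σ K) ^ s * g) ∈ p := by
      rw [← hcolon, Ideal.mem_colon_span_singleton]
      simpa [smul_eq_mul, mul_assoc] using h1
    rcases hp.mem_or_mem h2 with h | h
    · exact absurd (hp.mem_of_pow_mem _ h) hyp
    · exact h
  · -- ⊇ : easy direction
    intro g hg
    rw [← hcolon, Ideal.mem_colon_span_singleton] at hg
    rw [Ideal.mem_colon_span_singleton]
    have : J ^ s ≤ Jt ^ s := Ideal.pow_right_mono hJle s
    exact this hg
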